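/- For every smooth u : Ω → ℂ the Teukolsky operators factor through the first Chandrasekhar transformation: 𝔗⁽⁺²⁾u = −w·( L(w⁻¹L̲u) − (w′/w)(w⁻¹L̲u) + (𝓛⁽⁺²⁾ − 2 + 6M/r)u ) and 𝔗⁽⁻²⁾u = −w·( L̲(w⁻¹Lu) + (w′/w)(w⁻¹Lu) + (𝓛⁽⁻²⁾ − 2 + 6M/r)u ) hold at every point of Ω. -/

import Mathlib

/- Schwarzschild-Anti-de Sitter background: basic operators on functions
   u(t, r, ϑ, φ) with values in ℂ. -/

noncomputable section

open Filter Topology Set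

namespace Grav

abbrev F4 : Type := ℝ → ℝ → ℝ → ℝ → ℂ

/-- `Δ(r) = r² + k²r⁴ − 2Mr`. -/
def Del (M k r : ℝ) : ℝ := r ^ 2 + k ^ 2 * r ^ 4 - 2 * M * r

/-- `∂ₜ`. -/
def dT (u : F4) : F4 := fun t r ϑ φ => deriv (fun s => u s r ϑ φ) t
/-- `∂ᵣ`. -/
def dR (u : F4) : F4 := fun t r ϑ φ => deriv (fun s => u t s ϑ φ) r
/-- `∂_ϑ`. -/
def dTh (u : F4) : F4 := fun t r ϑ φ => deriv (fun s => u t r s φ) ϑ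
/-- `∂_φ`. -/
def dPh (u : F4) : F4 := fun t r ϑ φ => deriv (fun s => u t r ϑ s) φ

/-- `L u = ∂ₜ u + (Δ/r²) ∂ᵣ u`. -/
def opL (M k : ℝ) (u : F4) : F4 := fun t r ϑ φ =>
  dT u t r ϑ φ + ((Del M k r / r ^ 2 : ℝ) : ℂ) * dR u t r ϑ φ

/-- `L̲ u = ∂ₜ u − (Δ/r²) ∂ᵣ u`. -/
def opLb (M k : ℝ) (u : F4) : F4 := fun t r ϑ φ =>
  dT u t r ϑ φ - ((Del M k r / r ^ 2 : ℝ) : ℂ) * dR u t r ϑ φ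

/-- `w = Δ/r⁴`. -/
def ww (M k r : ℝ) : ℝ := Del M k r / r ^ 4
/-- `w′ = w·(6M − 2r)/r²`. -/
def wwP (M k r : ℝ) : ℝ := ww M k r * (6 * M - 2 * r) / r ^ 2

/-- The angular operator `𝓛⁽⁺²⁾`. -/
def angP (u : F4) : F4 := fun t r ϑ φ =>
  -(Real.sin ϑ : ℂ)⁻¹ * deriv (fun x => (Real.sin x : ℂ) * dTh u t r x φ) ϑ
  - (((Real.sin ϑ) ^ 2 : ℝ) : ℂ)⁻¹ * dPh (dPh u) t r ϑ φ
  - 4 * Complex.I * ((Real.cos ϑ / (Real.sin ϑ) ^ 2 : ℝ) : ℂ) * dPh u t r ϑ φ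
  + 4 * (((Real.cos ϑ / Real.sin ϑ) ^ 2 : ℝ) : ℂ) * u t r ϑ φ
  + 4 * u t r ϑ φ

/-- The angular operator `𝓛⁽⁻²⁾`. -/
def angM (u : F4) : F4 := fun t r ϑ φ =>
  -(Real.sin ϑ : ℂ)⁻¹ * deriv (fun x => (Real.sin x : ℂ) * dTh u t r x φ) ϑ
  - (((Real.sin ϑ) ^ 2 : ℝ) : ℂ)⁻¹ * dPh (dPh u) t r ϑ φ
  + 4 * Complex.I * ((Real.cos ϑ / (Real.sin ϑ) ^ 2 : ℝ) : ℂ) * dPh u t r ϑ φ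
  + 4 * (((Real.cos ϑ / Real.sin ϑ) ^ 2 : ℝ) : ℂ) * u t r ϑ φ
  + 4 * u t r ϑ φ

/-- The Teukolsky operator `𝔗⁽⁺²⁾u = −LL̲u + 2(w′/w)L̲u − w(𝓛⁽⁺²⁾ − 2 + 6M/r)u`. -/
def Tp (M k : ℝ) (u : F4) : F4 := fun t r ϑ φ =>
  - opL M k (opLb M k u) t r ϑ φ
  + 2 * ((wwP M k r / ww M k r : ℝ) : ℂ) * opLb M k u t r ϑ φ
  - ((ww M k r : ℝ) : ℂ) *
      (angP u t r ϑ φ - 2 * u t r ϑ φ + ((6 * M / r : ℝ) : ℂ) * u t r ϑ φ)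

/-- The Teukolsky operator `𝔗⁽⁻²⁾u = −LL̲u − 2(w′/w)Lu − w(𝓛⁽⁻²⁾ − 2 + 6M/r)u`. -/
def Tm (M k : ℝ) (u : F4) : F4 := fun t r ϑ φ =>
  - opL M k (opLb M k u) t r ϑ φ
  - 2 * ((wwP M k r / ww M k r : ℝ) : ℂ) * opL M k u t r ϑ φ
  - ((ww M k r : ℝ) : ℂ) *
      (angM u t r ϑ φ - 2 * u t r ϑ φ + ((6 * M / r : ℝ) : ℂ) * u t r ϑ φ)

/-- The Regge–Wheeler operator `𝕽⁽⁺²⁾u = −LL̲u − w(𝓛⁽⁺²⁾ − 6M/r)u`. -/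
def RWp (M k : ℝ) (u : F4) : F4 := fun t r ϑ φ =>
  - opL M k (opLb M k u) t r ϑ φ
  - ((ww M k r : ℝ) : ℂ) * (angP u t r ϑ φ - ((6 * M / r : ℝ) : ℂ) * u t r ϑ φ)

/-- The Regge–Wheeler operator `𝕽⁽⁻²⁾u = −LL̲u − w(𝓛⁽⁻²⁾ − 6M/r)u`. -/
def RWm (M k : ℝ) (u : F4) : F4 := fun t r ϑ φ =>
  - opL M k (opLb M k u) t r ϑ φ
  - ((ww M k r : ℝ) : ℂ) * (angM u t r ϑ φ - ((6 * M / r : ℝ) : ℂ) * u t r ϑ φ)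

/-- The exterior region `Ω = {r > r₊, 0 < ϑ < π}` (as a subset of ℝ⁴). -/
def OmSet (rp : ℝ) : Set (ℝ × ℝ × ℝ × ℝ) :=
  {p | rp < p.2.1 ∧ 0 < p.2.2.1 ∧ p.2.2.1 < Real.pi}

/-- `u` is smooth on `Ω`. -/
def SmoothOnOm (rp : ℝ) (u : F4) : Prop :=
  ContDiffOn ℝ (⊤ : ℕ∞)
    (fun p : ℝ × ℝ × ℝ × ℝ => u p.1 p.2.1 p.2.2.1 p.2.2.2) (OmSet rp)

/-- Multiplication by `w⁻¹`. -/
def winv (M k : ℝ) (u : F4) : F4 := fun t r ϑ φ => ((ww M k r : ℝ) : ℂ)⁻¹ * u t r ϑ φ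
/-- Multiplication by `w`. -/
def wmul (M k : ℝ) (u : F4) : F4 := fun t r ϑ φ => ((ww M k r : ℝ) : ℂ) * u t r ϑ φ
/-- Pointwise complex conjugation. -/
def conjF (u : F4) : F4 := fun t r ϑ φ => (starRingEnd ℂ) (u t r ϑ φ)

/-- `𝓛⁽⁺²⁾(𝓛⁽⁺²⁾ − 2)`. -/
def angSqP (u : F4) : F4 := angP (fun t r ϑ φ => angP u t r ϑ φ - 2 * u t r ϑ φ)
/-- `𝓛⁽⁻²⁾(𝓛⁽⁻²⁾ − 2)`. -/
def angSqM (u : F4) : F4 := angM (fun t r ϑ φ => angM u t r ϑ φ - 2 * u t r ϑ φ)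

/-- `𝓛⁽⁺²⁾(𝓛⁽⁺²⁾ − 2) + 12M∂ₜ`. -/
def TSp (M : ℝ) (u : F4) : F4 := fun t r ϑ φ =>
  angSqP u t r ϑ φ + 12 * (M : ℂ) * dT u t r ϑ φ
/-- `𝓛⁽⁻²⁾(𝓛⁽⁻²⁾ − 2) − 12M∂ₜ`. -/
def TSm (M : ℝ) (u : F4) : F4 := fun t r ϑ φ =>
  angSqM u t r ϑ φ - 12 * (M : ℂ) * dT u t r ϑ φ


/-! ### Auxiliary material for `statement1` -/

/-- The uncurried version of `u`. -/
def Uc (u : F4) : (ℝ × ℝ × ℝ × ℝ) → ℂ := fun p => u p.1 p.2.1 p.2.2.1 p.2.2.2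

lemma isOpen_OmSet (rp : ℝ) : IsOpen (OmSet rp) := by
  have h1 : Continuous fun p : ℝ × ℝ × ℝ × ℝ => p.2.1 := by fun_prop
  have h2 : Continuous fun p : ℝ × ℝ × ℝ × ℝ => p.2.2.1 := by fun_prop
  have : OmSet rp = {p : ℝ × ℝ × ℝ × ℝ | rp < p.2.1} ∩
      ({p : ℝ × ℝ × ℝ × ℝ | 0 < p.2.2.1} ∩ {p : ℝ × ℝ × ℝ × ℝ | p.2.2.1 < Real.pi}) := by
    ext p; simp [OmSet, and_assoc]
  rw [this]
  exact (isOpen_lt continuous_const h1).inter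
    ((isOpen_lt continuous_const h2).inter (isOpen_lt h2 continuous_const))

lemma hasDerivAt_lineT (t r ϑ φ : ℝ) :
    HasDerivAt (fun s => ((s, r, ϑ, φ) : ℝ × ℝ × ℝ × ℝ)) (1, 0, 0, 0) t :=
  (hasDerivAt_id t).prodMk (hasDerivAt_const t (r, ϑ, φ))

lemma hasDerivAt_lineR (t r ϑ φ : ℝ) :
    HasDerivAt (fun s => ((t, s, ϑ, φ) : ℝ × ℝ × ℝ × ℝ)) (0, 1, 0, 0) r :=
  (hasDerivAt_const r t).prodMk ((hasDerivAt_id r).prodMk (hasDerivAt_const r (ϑ, φ)))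

lemma dT_eq_fderiv {rp : ℝ} {u : F4} (hu : SmoothOnOm rp u) {t r ϑ φ : ℝ}
    (hp : (t, r, ϑ, φ) ∈ OmSet rp) :
    dT u t r ϑ φ = fderiv ℝ (Uc u) (t, r, ϑ, φ) (1, 0, 0, 0) := by
  have hd : DifferentiableAt ℝ (Uc u) (t, r, ϑ, φ) :=
    (hu.contDiffAt ((isOpen_OmSet rp).mem_nhds hp)).differentiableAt (by simp)
  exact (hd.hasFDerivAt.comp_hasDerivAt t (hasDerivAt_lineT t r ϑ φ)).deriv

lemma dR_eq_fderiv {rp : ℝ} {u : F4} (hu : SmoothOnOm rp u) {t r ϑ φ : ℝ}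
    (hp : (t, r, ϑ, φ) ∈ OmSet rp) :
    dR u t r ϑ φ = fderiv ℝ (Uc u) (t, r, ϑ, φ) (0, 1, 0, 0) := by
  have hd : DifferentiableAt ℝ (Uc u) (t, r, ϑ, φ) :=
    (hu.contDiffAt ((isOpen_OmSet rp).mem_nhds hp)).differentiableAt (by simp)
  exact (hd.hasFDerivAt.comp_hasDerivAt r (hasDerivAt_lineR t r ϑ φ)).deriv

lemma partials {rp : ℝ} {u : F4} (hu : SmoothOnOm rp u) {t r ϑ φ : ℝ}
    (hp : (t, r, ϑ, φ) ∈ OmSet rp) :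
    DifferentiableAt ℝ (fun s => dT u s r ϑ φ) t ∧
    DifferentiableAt ℝ (fun s => dR u s r ϑ φ) t ∧
    DifferentiableAt ℝ (fun s => dT u t s ϑ φ) r ∧
    DifferentiableAt ℝ (fun s => dR u t s ϑ φ) r ∧
    dT (dR u) t r ϑ φ = dR (dT u) t r ϑ φ := by
  have hO : IsOpen (OmSet rp) := isOpen_OmSet rp
  have hfE : ContDiffOn ℝ (⊤ : ℕ∞) (fun q => fderiv ℝ (Uc u) q) (OmSet rp) :=
    hu.fderiv_of_isOpen hO (by simp)
  have hfEp : DifferentiableAt ℝ (fun q => fderiv ℝ (Uc u) q) (t, r, ϑ, φ) :=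
    (hfE.contDiffAt (hO.mem_nhds hp)).differentiableAt (by simp)
  have hA : HasFDerivAt (fun q => fderiv ℝ (Uc u) q)
      (fderiv ℝ (fun q => fderiv ℝ (Uc u) q) (t, r, ϑ, φ)) (t, r, ϑ, φ) := hfEp.hasFDerivAt
  set A := fderiv ℝ (fun q => fderiv ℝ (Uc u) q) (t, r, ϑ, φ) with hAdef
  have hTmem : ∀ᶠ s in 𝓝 t, ((s, r, ϑ, φ) : ℝ × ℝ × ℝ × ℝ) ∈ OmSet rp :=
    (hasDerivAt_lineT t r ϑ φ).continuousAt (hO.mem_nhds hp)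
  have hRmem : ∀ᶠ s in 𝓝 r, ((t, s, ϑ, φ) : ℝ × ℝ × ℝ × ℝ) ∈ OmSet rp :=
    (hasDerivAt_lineR t r ϑ φ).continuousAt (hO.mem_nhds hp)
  have keyT : ∀ e : ℝ × ℝ × ℝ × ℝ,
      HasDerivAt (fun s => fderiv ℝ (Uc u) (s, r, ϑ, φ) e) (A (1, 0, 0, 0) e) t := by
    intro e
    have h3 : HasDerivAt (fun s => fderiv ℝ (Uc u) ((s, r, ϑ, φ) : ℝ × ℝ × ℝ × ℝ))
        (A (1, 0, 0, 0)) t := hA.comp_hasDerivAt t (hasDerivAt_lineT t r ϑ φ)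
    exact (ContinuousLinearMap.apply ℝ ℂ e).hasFDerivAt.comp_hasDerivAt t h3
  have keyR : ∀ e : ℝ × ℝ × ℝ × ℝ,
      HasDerivAt (fun s => fderiv ℝ (Uc u) (t, s, ϑ, φ) e) (A (0, 1, 0, 0) e) r := by
    intro e
    have h3 : HasDerivAt (fun s => fderiv ℝ (Uc u) ((t, s, ϑ, φ) : ℝ × ℝ × ℝ × ℝ))
        (A (0, 1, 0, 0)) r := hA.comp_hasDerivAt r (hasDerivAt_lineR t r ϑ φ)
    exact (ContinuousLinearMap.apply ℝ ℂ e).hasFDerivAt.comp_hasDerivAt r h3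
  have eTT : (fun s => dT u s r ϑ φ) =ᶠ[𝓝 t]
      (fun s => fderiv ℝ (Uc u) (s, r, ϑ, φ) (1, 0, 0, 0)) := by
    filter_upwards [hTmem] with s hs; exact dT_eq_fderiv hu hs
  have eRT : (fun s => dR u s r ϑ φ) =ᶠ[𝓝 t]
      (fun s => fderiv ℝ (Uc u) (s, r, ϑ, φ) (0, 1, 0, 0)) := by
    filter_upwards [hTmem] with s hs; exact dR_eq_fderiv hu hs
  have eTR : (fun s => dT u t s ϑ φ) =ᶠ[𝓝 r]
      (fun s => fderiv ℝ (Uc u) (t, s, ϑ, φ) (1, 0, 0, 0)) := by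
    filter_upwards [hRmem] with s hs; exact dT_eq_fderiv hu hs
  have eRR : (fun s => dR u t s ϑ φ) =ᶠ[𝓝 r]
      (fun s => fderiv ℝ (Uc u) (t, s, ϑ, φ) (0, 1, 0, 0)) := by
    filter_upwards [hRmem] with s hs; exact dR_eq_fderiv hu hs
  have H1 : HasDerivAt (fun s => dT u s r ϑ φ) (A (1, 0, 0, 0) (1, 0, 0, 0)) t :=
    (keyT _).congr_of_eventuallyEq eTT
  have H2 : HasDerivAt (fun s => dR u s r ϑ φ) (A (1, 0, 0, 0) (0, 1, 0, 0)) t :=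
    (keyT _).congr_of_eventuallyEq eRT
  have H3 : HasDerivAt (fun s => dT u t s ϑ φ) (A (0, 1, 0, 0) (1, 0, 0, 0)) r :=
    (keyR _).congr_of_eventuallyEq eTR
  have H4 : HasDerivAt (fun s => dR u t s ϑ φ) (A (0, 1, 0, 0) (0, 1, 0, 0)) r :=
    (keyR _).congr_of_eventuallyEq eRR
  refine ⟨H1.differentiableAt, H2.differentiableAt, H3.differentiableAt, H4.differentiableAt, ?_⟩
  have hEv : ∀ᶠ q in 𝓝 ((t, r, ϑ, φ) : ℝ × ℝ × ℝ × ℝ),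
      HasFDerivAt (Uc u) (fderiv ℝ (Uc u) q) q := by
    filter_upwards [hO.mem_nhds hp] with q hq
    exact ((hu.contDiffAt (hO.mem_nhds hq)).differentiableAt (by simp)).hasFDerivAt
  have hsym := second_derivative_symmetric_of_eventually hEv hA
    ((1, 0, 0, 0) : ℝ × ℝ × ℝ × ℝ) ((0, 1, 0, 0) : ℝ × ℝ × ℝ × ℝ)
  have e5a : dT (dR u) t r ϑ φ = A (1, 0, 0, 0) (0, 1, 0, 0) := H2.deriv
  have e5b : dR (dT u) t r ϑ φ = A (0, 1, 0, 0) (1, 0, 0, 0) := H3.deriv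
  rw [e5a, e5b, hsym]

lemma hasDerivAt_Del (M k r : ℝ) :
    HasDerivAt (fun s => Del M k s) (2 * r + 4 * k ^ 2 * r ^ 3 - 2 * M) r := by
  have h : HasDerivAt (fun s : ℝ => s ^ 2 + k ^ 2 * s ^ 4 - 2 * M * s)
      (2 * r + 4 * k ^ 2 * r ^ 3 - 2 * M) r := by
    have h1 := ((hasDerivAt_pow 2 r).add ((hasDerivAt_pow 4 r).const_mul (k ^ 2))).sub
      ((hasDerivAt_id r).const_mul (2 * M))
    have : ((2 : ℕ) : ℝ) * r ^ (2 - 1) + k ^ 2 * (((4 : ℕ) : ℝ) * r ^ (4 - 1)) - 2 * M * 1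
        = 2 * r + 4 * k ^ 2 * r ^ 3 - 2 * M := by push_cast; ring
    rw [this] at h1
    exact h1
  exact h

lemma hasDerivAt_ww (M k : ℝ) {r : ℝ} (hr : r ≠ 0) :
    HasDerivAt (fun s => ww M k s) ((6 * M - 2 * r) / r ^ 4) r := by
  have h4 : HasDerivAt (fun s : ℝ => s ^ 4) (4 * r ^ 3) r := by
    simpa using hasDerivAt_pow 4 r
  have h := (hasDerivAt_Del M k r).div h4 (pow_ne_zero 4 hr)
  have hval : ((2 * r + 4 * k ^ 2 * r ^ 3 - 2 * M) * r ^ 4 - Del M k r * (4 * r ^ 3))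
      / (r ^ 4) ^ 2 = (6 * M - 2 * r) / r ^ 4 := by
    unfold Del; field_simp; ring
  rw [hval] at h
  exact h


set_option maxHeartbeats 800000 in
lemma chandra_alg1 (TY RY Y Z W d e P : ℂ) (hW : W ≠ 0) (hP : d * e = P) :
    -(TY + d * RY) + 2 * (P / W) * Y - W * Z
      = -W * ((W⁻¹ * TY + d * (-e / W ^ 2 * Y + W⁻¹ * RY)) - P / W * (W⁻¹ * Y) + Z) := by
  field_simp [hW]
  linear_combination (-Y) * hP

set_option maxHeartbeats 800000 in
lemma chandra_alg2 (TA RA Y Z W d e P : ℂ) (hW : W ≠ 0) (hP : d * e = P) :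
    -(TA - d * RA) - 2 * (P / W) * Y - W * Z
      = -W * ((W⁻¹ * TA - d * (-e / W ^ 2 * Y + W⁻¹ * RA)) + P / W * (W⁻¹ * Y) + Z) := by
  field_simp [hW]
  linear_combination Y * hP

/-- The Teukolsky operators factor through the first Chandrasekhar
transformation:
`𝔗⁽⁺²⁾u = −w(L(w⁻¹L̲u) − (w′/w)(w⁻¹L̲u) + (𝓛⁽⁺²⁾ − 2 + 6M/r)u)` and
`𝔗⁽⁻²⁾u = −w(L̲(w⁻¹Lu) + (w′/w)(w⁻¹Lu) + (𝓛⁽⁻²⁾ − 2 + 6M/r)u)` on `Ω`. -/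
theorem statement1
    (M k rp : ℝ) (hM : 0 < M) (hk : 0 < k) (hrp : 0 < rp)
    (hroot : rp + k ^ 2 * rp ^ 3 - 2 * M = 0)
    (u : F4) (hu : SmoothOnOm rp u) :
    ∀ t r ϑ φ : ℝ, (t, r, ϑ, φ) ∈ OmSet rp →
      Tp M k u t r ϑ φ =
        -((ww M k r : ℝ) : ℂ) *
          (opL M k (winv M k (opLb M k u)) t r ϑ φ
            - ((wwP M k r / ww M k r : ℝ) : ℂ) * winv M k (opLb M k u) t r ϑ φ
            + (angP u t r ϑ φ - 2 * u t r ϑ φ + ((6 * M / r : ℝ) : ℂ) * u t r ϑ φ))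
      ∧
      Tm M k u t r ϑ φ =
        -((ww M k r : ℝ) : ℂ) *
          (opLb M k (winv M k (opL M k u)) t r ϑ φ
            + ((wwP M k r / ww M k r : ℝ) : ℂ) * winv M k (opL M k u) t r ϑ φ
            + (angM u t r ϑ φ - 2 * u t r ϑ φ + ((6 * M / r : ℝ) : ℂ) * u t r ϑ φ)) := by
  intro t r ϑ φ hp
  obtain ⟨H1, H2, H3, H4, H5⟩ := partials hu hp
  have hrpos : 0 < r := hrp.trans hp.1
  have hr0 : r ≠ 0 := hrpos.ne'
  have h3' : rp ^ 3 < r ^ 3 := pow_lt_pow_left₀ hp.1 hrp.le (by norm_num)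
  have hkk : k ^ 2 * rp ^ 3 ≤ k ^ 2 * r ^ 3 := by nlinarith [sq_nonneg k]
  have hg : 0 < r + k ^ 2 * r ^ 3 - 2 * M := by nlinarith [hp.1]
  have hDelpos : 0 < Del M k r := by
    have : Del M k r = r * (r + k ^ 2 * r ^ 3 - 2 * M) := by unfold Del; ring
    rw [this]; positivity
  have hW0 : ww M k r ≠ 0 := (div_pos hDelpos (pow_pos hrpos 4)).ne'
  have hWc : ((ww M k r : ℝ) : ℂ) ≠ 0 := Complex.ofReal_ne_zero.mpr hW0
  -- derivative of the coefficient Δ/r² (as a ℂ-valued function of r)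
  have h2 : HasDerivAt (fun s : ℝ => s ^ 2) (2 * r) r := by simpa using hasDerivAt_pow 2 r
  obtain ⟨cD, hCD⟩ : ∃ d : ℂ, HasDerivAt (fun s : ℝ => ((Del M k s / s ^ 2 : ℝ) : ℂ)) d r :=
    ⟨_, ((hasDerivAt_Del M k r).div h2 (pow_ne_zero 2 hr0)).ofReal_comp⟩
  -- derivative of w⁻¹ (as a ℂ-valued function of r)
  have hWic : HasDerivAt (fun s : ℝ => ((ww M k s : ℝ) : ℂ)⁻¹)
      (-(((6 * M - 2 * r) / r ^ 4 : ℝ) : ℂ) / ((ww M k r : ℝ) : ℂ) ^ 2) r :=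
    by
      have h := (hasDerivAt_const r (1 : ℂ)).div ((hasDerivAt_ww M k hr0).ofReal_comp) hWc
      convert h using 1
      · rfl
      · exact funext fun s => (one_div _).symm
      · ring
  -- abbreviations
  have hvRb : DifferentiableAt ℝ (fun s => opLb M k u t s ϑ φ) r := by
    have : (fun s => opLb M k u t s ϑ φ)
        = fun s => dT u t s ϑ φ - ((Del M k s / s ^ 2 : ℝ) : ℂ) * dR u t s ϑ φ := rfl
    rw [this]; exact H3.sub (hCD.differentiableAt.mul H4)
  have hvRa : DifferentiableAt ℝ (fun s => opL M k u t s ϑ φ) r := by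
    have : (fun s => opL M k u t s ϑ φ)
        = fun s => dT u t s ϑ φ + ((Del M k s / s ^ 2 : ℝ) : ℂ) * dR u t s ϑ φ := rfl
    rw [this]; exact H3.add (hCD.differentiableAt.mul H4)
  -- product rule for w⁻¹ · (L̲u) and w⁻¹ · (Lu) in the r-direction
  have hRwb : dR (winv M k (opLb M k u)) t r ϑ φ
      = (-(((6 * M - 2 * r) / r ^ 4 : ℝ) : ℂ) / ((ww M k r : ℝ) : ℂ) ^ 2)
          * opLb M k u t r ϑ φ
        + ((ww M k r : ℝ) : ℂ)⁻¹ * dR (opLb M k u) t r ϑ φ :=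
    (hWic.mul hvRb.hasDerivAt).deriv
  have hRwa : dR (winv M k (opL M k u)) t r ϑ φ
      = (-(((6 * M - 2 * r) / r ^ 4 : ℝ) : ℂ) / ((ww M k r : ℝ) : ℂ) ^ 2)
          * opL M k u t r ϑ φ
        + ((ww M k r : ℝ) : ℂ)⁻¹ * dR (opL M k u) t r ϑ φ :=
    (hWic.mul hvRa.hasDerivAt).deriv
  -- t-derivative commutes with multiplication by the constant w⁻¹
  have hTwb : dT (winv M k (opLb M k u)) t r ϑ φ
      = ((ww M k r : ℝ) : ℂ)⁻¹ * dT (opLb M k u) t r ϑ φ := by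
    show deriv (fun s => ((ww M k r : ℝ) : ℂ)⁻¹ * opLb M k u s r ϑ φ) t = _
    exact deriv_const_mul_field _
  have hTwa : dT (winv M k (opL M k u)) t r ϑ φ
      = ((ww M k r : ℝ) : ℂ)⁻¹ * dT (opL M k u) t r ϑ φ := by
    show deriv (fun s => ((ww M k r : ℝ) : ℂ)⁻¹ * opL M k u s r ϑ φ) t = _
    exact deriv_const_mul_field _
  -- the commutator [L, L̲]u = 0 at the point
  have hTb : dT (opLb M k u) t r ϑ φ
      = dT (dT u) t r ϑ φ - ((Del M k r / r ^ 2 : ℝ) : ℂ) * dT (dR u) t r ϑ φ :=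
    (H1.hasDerivAt.sub (H2.hasDerivAt.const_mul _)).deriv
  have hTa : dT (opL M k u) t r ϑ φ
      = dT (dT u) t r ϑ φ + ((Del M k r / r ^ 2 : ℝ) : ℂ) * dT (dR u) t r ϑ φ :=
    (H1.hasDerivAt.add (H2.hasDerivAt.const_mul _)).deriv
  have hRb : dR (opLb M k u) t r ϑ φ
      = dR (dT u) t r ϑ φ
        - (cD * dR u t r ϑ φ + ((Del M k r / r ^ 2 : ℝ) : ℂ) * dR (dR u) t r ϑ φ) :=
    (H3.hasDerivAt.sub (hCD.mul H4.hasDerivAt)).deriv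
  have hRa : dR (opL M k u) t r ϑ φ
      = dR (dT u) t r ϑ φ
        + (cD * dR u t r ϑ φ + ((Del M k r / r ^ 2 : ℝ) : ℂ) * dR (dR u) t r ϑ φ) :=
    (H3.hasDerivAt.add (hCD.mul H4.hasDerivAt)).deriv
  have hcomm : opL M k (opLb M k u) t r ϑ φ = opLb M k (opL M k u) t r ϑ φ := by
    show dT (opLb M k u) t r ϑ φ
        + ((Del M k r / r ^ 2 : ℝ) : ℂ) * dR (opLb M k u) t r ϑ φ
      = dT (opL M k u) t r ϑ φ
        - ((Del M k r / r ^ 2 : ℝ) : ℂ) * dR (opL M k u) t r ϑ φ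
    rw [hTb, hTa, hRb, hRa, H5]; ring
  -- arithmetic facts about the coefficients
  have hcdC : ((Del M k r / r ^ 2 : ℝ) : ℂ) * (((6 * M - 2 * r) / r ^ 4 : ℝ) : ℂ)
      = ((wwP M k r : ℝ) : ℂ) := by
    have : (Del M k r / r ^ 2) * ((6 * M - 2 * r) / r ^ 4) = wwP M k r := by
      unfold wwP ww; ring
    exact_mod_cast this
  have hq : ((wwP M k r / ww M k r : ℝ) : ℂ)
      = ((wwP M k r : ℝ) : ℂ) / ((ww M k r : ℝ) : ℂ) := by push_cast; ring
  have hrC : (r : ℂ) ≠ 0 := Complex.ofReal_ne_zero.mpr hr0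
  have hDC : ((Del M k r : ℝ) : ℂ) ≠ 0 := Complex.ofReal_ne_zero.mpr hDelpos.ne'
  have hww : ww M k r = Del M k r / r ^ 4 := rfl
  have hwwP : wwP M k r = Del M k r * (6 * M - 2 * r) / r ^ 6 := by
    unfold wwP ww; ring
  constructor
  · show -opL M k (opLb M k u) t r ϑ φ
        + 2 * ((wwP M k r / ww M k r : ℝ) : ℂ) * opLb M k u t r ϑ φ
        - ((ww M k r : ℝ) : ℂ) *
          (angP u t r ϑ φ - 2 * u t r ϑ φ + ((6 * M / r : ℝ) : ℂ) * u t r ϑ φ) = _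
    have e1 : opL M k (winv M k (opLb M k u)) t r ϑ φ
        = dT (winv M k (opLb M k u)) t r ϑ φ
          + ((Del M k r / r ^ 2 : ℝ) : ℂ) * dR (winv M k (opLb M k u)) t r ϑ φ := rfl
    have e0 : opL M k (opLb M k u) t r ϑ φ
        = dT (opLb M k u) t r ϑ φ
          + ((Del M k r / r ^ 2 : ℝ) : ℂ) * dR (opLb M k u) t r ϑ φ := rfl
    have e2 : winv M k (opLb M k u) t r ϑ φ
        = ((ww M k r : ℝ) : ℂ)⁻¹ * opLb M k u t r ϑ φ := rfl
    rw [e1, e0, e2, hTwb, hRwb, hq]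
    exact chandra_alg1 _ _ _ _ _ _ _ _ hWc hcdC
  · show -opL M k (opLb M k u) t r ϑ φ
        - 2 * ((wwP M k r / ww M k r : ℝ) : ℂ) * opL M k u t r ϑ φ
        - ((ww M k r : ℝ) : ℂ) *
          (angM u t r ϑ φ - 2 * u t r ϑ φ + ((6 * M / r : ℝ) : ℂ) * u t r ϑ φ) = _
    have e1 : opLb M k (winv M k (opL M k u)) t r ϑ φ
        = dT (winv M k (opL M k u)) t r ϑ φ
          - ((Del M k r / r ^ 2 : ℝ) : ℂ) * dR (winv M k (opL M k u)) t r ϑ φ := rfl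
    have e0 : opLb M k (opL M k u) t r ϑ φ
        = dT (opL M k u) t r ϑ φ
          - ((Del M k r / r ^ 2 : ℝ) : ℂ) * dR (opL M k u) t r ϑ φ := rfl
    have e2 : winv M k (opL M k u) t r ϑ φ
        = ((ww M k r : ℝ) : ℂ)⁻¹ * opL M k u t r ϑ φ := rfl
    rw [hcomm, e1, e0, e2, hTwa, hRwa, hq]
    exact chandra_alg2 _ _ _ _ _ _ _ _ hWc hcdC


end Grav
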